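/- Ω decomposes as a disjoint union Ω = ζ(Ω) ⊔ σ(ζ(Ω)): every w ∈ Ω lies in exactly one of ζ(Ω) and σ(ζ(Ω)). -/

import Mathlib

open Fin.NatCast in
/-- Thue-Morse sequence: parity of number of 1s in binary expansion. -/
def tm (n : ℕ) : Fin 2 := ((Nat.digits 2 n).count 1 : Fin 2)

/-- Thue-Morse substitution on letters. -/
def zetaWord (a : Fin 2) : List (Fin 2) := [a, 1 - a]

/-- Thue-Morse substitution on words. -/
def zetaL (w : List (Fin 2)) : List (Fin 2) := w.flatMap zetaWord

/-- Shift on bi-infinite sequences. -/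
def shiftZ (w : ℤ → Fin 2) : ℤ → Fin 2 := fun n => w (n + 1)

/-- ζ on bi-infinite sequences: ζ(w)(2n)=w(n), ζ(w)(2n+1)=1-w(n). -/
def zetaZ (w : ℤ → Fin 2) : ℤ → Fin 2 :=
  fun n => if n % 2 = 0 then w (n / 2) else 1 - w (n / 2)

/-- `v` occurs as a factor of the bi-infinite word `w`. -/
def IsFactorZ (v : List (Fin 2)) (w : ℤ → Fin 2) : Prop :=
  ∃ i : ℤ, ∀ k : ℕ, k < v.length → w (i + k) = v.getD k 0

/-- The Thue-Morse subshift: bi-infinite words all of whose factors occur in some ζⁿ(0). -/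
def Omega : Set (ℤ → Fin 2) :=
  {w | ∀ v : List (Fin 2), IsFactorZ v w → ∃ n : ℕ, v <:+: zetaL^[n] [0]}
lemma zetaL_cons (a : Fin 2) (l : List (Fin 2)) : zetaL (a :: l) = a :: (1-a) :: zetaL l := rfl
lemma zetaL_length (l : List (Fin 2)) : (zetaL l).length = 2 * l.length := by
  induction l with
  | nil => rfl
  | cons a l ih => rw [zetaL_cons]; simp [ih]; omega

lemma zetaL_getD_even : ∀ (l : List (Fin 2)) (k : ℕ), k < l.length →
    (zetaL l).getD (2*k) 0 = l.getD k 0 := by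
  intro l
  induction l with
  | nil => intro k h; simp at h
  | cons a l ih =>
    intro k h
    rw [zetaL_cons]
    cases k with
    | zero => rfl
    | succ k =>
      have : 2 * (k+1) = (2*k) + 2 := by omega
      rw [this]
      simp only [List.getD_cons_succ]
      exact ih k (by simpa using h)

lemma zetaL_getD_odd : ∀ (l : List (Fin 2)) (k : ℕ), k < l.length →
    (zetaL l).getD (2*k+1) 0 = 1 - l.getD k 0 := by
  intro l
  induction l with
  | nil => intro k h; simp at h
  | cons a l ih =>
    intro k h
    rw [zetaL_cons]
    cases k with
    | zero => rfl
    | succ k =>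
      have : 2 * (k+1) + 1 = (2*k+1) + 2 := by omega
      rw [this]
      simp only [List.getD_cons_succ]
      exact ih k (by simpa using h)

lemma occ_to_infix (m v : List (Fin 2)) (s : ℕ) (h1 : s + v.length ≤ m.length)
    (h2 : ∀ k, k < v.length → m.getD (s+k) 0 = v.getD k 0) : v <:+: m := by
  have hv : v = (m.drop s).take v.length := by
    apply List.ext_getElem
    · simp; omega
    · intro i hi1 hi2
      have hsi : s + i < m.length := by omega
      rw [List.getElem_take, List.getElem_drop]
      have := h2 i hi1
      rw [List.getD_eq_getElem m 0 hsi, List.getD_eq_getElem v 0 hi1] at this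
      exact this.symm
  rw [hv]
  exact ((List.take_prefix _ _).isInfix).trans (List.drop_suffix s m).isInfix

lemma infix_to_occ (m v : List (Fin 2)) (h : v <:+: m) :
    ∃ s, s + v.length ≤ m.length ∧ ∀ k, k < v.length → m.getD (s+k) 0 = v.getD k 0 := by
  obtain ⟨s, t, rfl⟩ := h
  refine ⟨s.length, by simp, fun k hk => ?_⟩
  rw [List.append_assoc, List.getD_append_right _ _ _ _ (by omega)]
  simp only [Nat.add_sub_cancel_left]
  rw [List.getD_append _ _ _ _ hk]

lemma fin2_eq_one_sub {a b : Fin 2} (h : a ≠ b) : b = 1 - a := by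
  have : ∀ a b : Fin 2, a ≠ b → b = 1 - a := by decide
  exact this a b h
lemma fin2_ne_one_sub (a : Fin 2) : a ≠ 1 - a := by
  have : ∀ a : Fin 2, a ≠ 1 - a := by decide
  exact this a
lemma fin2_sub_sub (a : Fin 2) : 1 - (1 - a) = a := by
  have : ∀ a : Fin 2, 1 - (1-a) = a := by decide
  exact this a
lemma fin2_one_sub_inj {a b : Fin 2} (h : 1 - a = b) : a = 1 - b := by
  have : ∀ a b : Fin 2, 1 - a = b → a = 1 - b := by decide
  exact this a b h

lemma no_even_double (l : List (Fin 2)) (m : ℕ) (h : 2*m+1 < (zetaL l).length) :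
    (zetaL l).getD (2*m) 0 ≠ (zetaL l).getD (2*m+1) 0 := by
  have hm : m < l.length := by rw [zetaL_length] at h; omega
  rw [zetaL_getD_even l m hm, zetaL_getD_odd l m hm]
  exact fin2_ne_one_sub _

lemma zetaL_append (x y : List (Fin 2)) : zetaL (x ++ y) = zetaL x ++ zetaL y :=
  List.flatMap_append ..

lemma zetaL_infix_mono {v t : List (Fin 2)} (h : v <:+: t) : zetaL v <:+: zetaL t := by
  obtain ⟨s, r, rfl⟩ := h
  exact ⟨zetaL s, zetaL r, by rw [← zetaL_append, ← zetaL_append]⟩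

lemma iter_infix (n : ℕ) : zetaL^[n] [0] <:+: zetaL^[n+1] [0] := by
  induction n with
  | zero => decide
  | succ n ih =>
    rw [Function.iterate_succ_apply', Function.iterate_succ_apply']
    exact zetaL_infix_mono ih

lemma infix_bump {v : List (Fin 2)} {n : ℕ} (h : v <:+: zetaL^[n] [0]) :
    v <:+: zetaL^[n+1] [0] := h.trans (iter_infix n)

lemma no_triple (a : Fin 2) (n : ℕ) : ¬ ([a,a,a] <:+: zetaL^[n] [0]) := by
  cases n with
  | zero => intro h; have := h.length_le; simp at this
  | succ n =>
    rw [Function.iterate_succ_apply']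
    intro h
    obtain ⟨s, hsl, hso⟩ := infix_to_occ _ _ h
    simp only [List.length_cons, List.length_nil] at hsl hso
    have e0 := hso 0 (by omega)
    have e1 := hso 1 (by omega)
    have e2 := hso 2 (by omega)
    rcases Nat.even_or_odd s with ⟨m, hm⟩ | ⟨m, hm⟩
    · apply no_even_double (zetaL^[n] [0]) m (by omega)
      rw [show 2*m = s + 0 by omega, show s+0+1 = s+1 by omega, e0, e1]; rfl
    · apply no_even_double (zetaL^[n] [0]) (m+1) (by omega)
      rw [show 2*(m+1) = s + 1 by omega, show s+1+1 = s+2 by omega, e1, e2]; rfl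

lemma no_alt5 (a : Fin 2) (n : ℕ) : ¬ ([a,1-a,a,1-a,a] <:+: zetaL^[n] [0]) := by
  cases n with
  | zero => intro h; have := h.length_le; simp at this
  | succ n =>
    rw [Function.iterate_succ_apply']
    intro h
    obtain ⟨s, hsl, hso⟩ := infix_to_occ _ _ h
    simp only [List.length_cons, List.length_nil] at hsl hso
    have hlen : (zetaL (zetaL^[n] [0])).length = 2 * (zetaL^[n] [0]).length := zetaL_length _
    set t := zetaL^[n] [0] with ht
    have e0 := hso 0 (by omega)
    have e1 := hso 1 (by omega)
    have e2 := hso 2 (by omega)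
    have e3 := hso 3 (by omega)
    have e4 := hso 4 (by omega)
    rcases Nat.even_or_odd s with ⟨m, hm⟩ | ⟨m, hm⟩
    · have hm0 : m < t.length := by omega
      have hm1 : m + 1 < t.length := by omega
      have hm2 : m + 2 < t.length := by omega
      have f0 : t.getD m 0 = a := by
        rw [← zetaL_getD_even t m hm0, show 2*m = s + 0 by omega, e0]; rfl
      have f1 : t.getD (m+1) 0 = a := by
        rw [← zetaL_getD_even t (m+1) hm1, show 2*(m+1) = s + 2 by omega, e2]; rfl
      have f2 : t.getD (m+2) 0 = a := by
        rw [← zetaL_getD_even t (m+2) hm2, show 2*(m+2) = s + 4 by omega, e4]; rfl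
      apply no_triple a n
      apply occ_to_infix t _ m (by simp; omega)
      intro k hk
      simp only [List.length_cons, List.length_nil] at hk
      interval_cases k
      · simpa using f0
      · simpa using f1
      · simpa using f2
    · have hm0 : m < t.length := by omega
      have hm1 : m + 1 < t.length := by omega
      have hm2 : m + 2 < t.length := by omega
      have f0 : t.getD m 0 = 1 - a := by
        apply fin2_one_sub_inj
        rw [← zetaL_getD_odd t m hm0, show 2*m+1 = s + 0 by omega, e0]; rfl
      have f1 : t.getD (m+1) 0 = 1 - a := by
        apply fin2_one_sub_inj
        rw [← zetaL_getD_odd t (m+1) hm1, show 2*(m+1)+1 = s + 2 by omega, e2]; rfl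
      have f2 : t.getD (m+2) 0 = 1 - a := by
        apply fin2_one_sub_inj
        rw [← zetaL_getD_odd t (m+2) hm2, show 2*(m+2)+1 = s + 4 by omega, e4]; rfl
      apply no_triple (1-a) n
      apply occ_to_infix t _ m (by simp; omega)
      intro k hk
      simp only [List.length_cons, List.length_nil] at hk
      interval_cases k
      · simpa using f0
      · simpa using f1
      · simpa using f2

lemma zetaZ_even (u : ℤ → Fin 2) (k : ℤ) : zetaZ u (2*k) = u k := by
  unfold zetaZ
  rw [if_pos (by omega)]
  congr 1
  omega

lemma zetaZ_odd (u : ℤ → Fin 2) (k : ℤ) : zetaZ u (2*k+1) = 1 - u k := by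
  unfold zetaZ
  rw [if_neg (by omega)]
  have h : (2*k+1)/2 = k := by omega
  rw [h]

def window (w : ℤ → Fin 2) (i : ℤ) (L : ℕ) : List (Fin 2) :=
  (List.range L).map (fun k : ℕ => w (i + (k : ℤ)))

lemma window_length (w : ℤ → Fin 2) (i : ℤ) (L : ℕ) : (window w i L).length = L := by
  rw [window, List.length_map, List.length_range]

lemma window_getD (w : ℤ → Fin 2) (i : ℤ) (L : ℕ) (k : ℕ) (h : k < L) :
    (window w i L).getD k 0 = w (i + k) := by
  rw [List.getD_eq_getElem _ _ (by rw [window_length]; exact h)]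
  simp only [window, List.getElem_map, List.getElem_range]

lemma window_isFactor (w : ℤ → Fin 2) (i : ℤ) (L : ℕ) : IsFactorZ (window w i L) w :=
  ⟨i, fun k hk => (window_getD w i L k (by simpa [window_length] using hk)).symm⟩

lemma good_parity (w : ℤ → Fin 2) (hw : w ∈ Omega) :
    (∀ k : ℤ, w (2*k) ≠ w (2*k+1)) ∨ (∀ k : ℤ, w (2*k+1) ≠ w (2*k+2)) := by
  by_contra hc
  push_neg at hc
  obtain ⟨⟨k0, h0⟩, ⟨k1, h1⟩⟩ := hc
  set a : ℤ := 2*k0 with ha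
  set b : ℤ := 2*k1+1 with hb
  set i : ℤ := min a b with hi
  set L : ℕ := (max a b - i).toNat + 2 with hL
  obtain ⟨n, hn⟩ := hw (window w i L) (window_isFactor w i L)
  replace hn := infix_bump hn
  rw [Function.iterate_succ_apply'] at hn
  obtain ⟨s, hsl, hso⟩ := infix_to_occ _ _ hn
  rw [window_length] at hsl hso
  set d0 : ℕ := (a - i).toNat with hd0
  set d1 : ℕ := (b - i).toNat with hd1
  have hda : d0 + 1 < L := by omega
  have hdb : d1 + 1 < L := by omega
  have g0 : (zetaL (zetaL^[n] [0])).getD (s+d0) 0 = (zetaL (zetaL^[n] [0])).getD (s+(d0+1)) 0 := by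
    rw [hso d0 (by omega), hso (d0+1) (by omega),
      window_getD w i L d0 (by omega), window_getD w i L (d0+1) (by omega),
      show i + (d0 : ℤ) = 2*k0 by omega, show i + ((d0+1 : ℕ) : ℤ) = 2*k0+1 by push_cast; omega]
    exact h0
  have g1 : (zetaL (zetaL^[n] [0])).getD (s+d1) 0 = (zetaL (zetaL^[n] [0])).getD (s+(d1+1)) 0 := by
    rw [hso d1 (by omega), hso (d1+1) (by omega),
      window_getD w i L d1 (by omega), window_getD w i L (d1+1) (by omega),
      show i + (d1 : ℤ) = 2*k1+1 by omega, show i + ((d1+1 : ℕ) : ℤ) = 2*k1+2 by push_cast; omega]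
    exact h1
  have hpar : (d0 + d1) % 2 = 1 := by omega
  rcases Nat.even_or_odd (s + d0) with ⟨m, hm⟩ | ⟨m, hm⟩
  · apply no_even_double (zetaL^[n] [0]) m (by omega)
    rw [show s+(d0+1) = s+d0+1 by omega] at g0
    rw [show 2*m = s + d0 by omega]
    exact g0
  · obtain ⟨m2, hm2⟩ : ∃ m2, s + d1 = 2*m2 := ⟨(s+d1)/2, by omega⟩
    apply no_even_double (zetaL^[n] [0]) m2 (by omega)
    rw [show s+(d1+1) = s+d1+1 by omega] at g1
    rw [show 2*m2 = s + d1 by omega]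
    exact g1

lemma deparse (w : ℤ → Fin 2) (hw : w ∈ Omega) (c : ℤ)
    (hne : ∀ k : ℤ, w (2*k + c) ≠ w (2*k + c + 1)) :
    (fun n => w (2*n + c)) ∈ Omega ∧ ∀ m : ℤ, zetaZ (fun n => w (2*n + c)) m = w (m + c) := by
  constructor
  · intro v hv
    obtain ⟨j0, hvi⟩ := hv
    have hfac : IsFactorZ (zetaL v) w := by
      refine ⟨2*j0 + c, fun k hk => ?_⟩
      rw [zetaL_length] at hk
      rcases Nat.even_or_odd k with ⟨j, hj⟩ | ⟨j, hj⟩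
      · have hjv : j < v.length := by omega
        have hk2 : k = 2*j := by omega
        subst hk2
        rw [show (2*j0 + c) + ((2*j : ℕ) : ℤ) = 2*(j0+(j:ℤ)) + c by push_cast; ring,
          zetaL_getD_even v j hjv]
        exact hvi j hjv
      · have hjv : j < v.length := by omega
        have hk2 : k = 2*j+1 := by omega
        subst hk2
        rw [show (2*j0 + c) + ((2*j+1 : ℕ) : ℤ) = 2*(j0+(j:ℤ)) + c + 1 by push_cast; ring,
          zetaL_getD_odd v j hjv, ← hvi j hjv]
        exact fin2_eq_one_sub (hne (j0 + (j:ℤ)))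
    obtain ⟨n, hn⟩ := hw (zetaL v) hfac
    replace hn := infix_bump hn
    rw [Function.iterate_succ_apply'] at hn
    obtain ⟨s, hsl, hso⟩ := infix_to_occ _ _ hn
    have hlt : (zetaL (zetaL^[n] [0])).length = 2 * (zetaL^[n] [0]).length := zetaL_length _
    have hlv : (zetaL v).length = 2 * v.length := zetaL_length v
    rcases Nat.even_or_odd s with ⟨m, hm⟩ | ⟨m, hm⟩
    · refine ⟨n, occ_to_infix _ v m (by omega) fun k hk => ?_⟩
      have e := hso (2*k) (by omega)
      rw [show s + 2*k = 2*(m+k) by omega] at e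
      rw [zetaL_getD_even _ (m+k) (by omega), zetaL_getD_even v k hk] at e
      exact e
    · by_cases hsmall : v.length ≤ 2
      · refine ⟨3, ?_⟩
        rcases v with _ | ⟨x, _ | ⟨y, _ | ⟨z, r⟩⟩⟩
        · decide
        · fin_cases x <;> decide
        · fin_cases x <;> fin_cases y <;> decide
        · simp at hsmall
      · exfalso
        push_neg at hsmall
        have h0v : 0 < v.length := by omega
        have h1v : 1 < v.length := by omega
        have h2v : 2 < v.length := by omega
        have e0 := hso 0 (by omega)
        have e1 := hso 1 (by omega)
        have e2 := hso 2 (by omega)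
        have e3 := hso 3 (by omega)
        have e4 := hso 4 (by omega)
        rw [show (zetaL v).getD 0 0 = v.getD 0 0 from zetaL_getD_even v 0 h0v] at e0
        rw [show (zetaL v).getD 1 0 = 1 - v.getD 0 0 from zetaL_getD_odd v 0 h0v] at e1
        rw [show (zetaL v).getD 2 0 = v.getD 1 0 from zetaL_getD_even v 1 h1v] at e2
        rw [show (zetaL v).getD 3 0 = 1 - v.getD 1 0 from zetaL_getD_odd v 1 h1v] at e3
        rw [show (zetaL v).getD 4 0 = v.getD 2 0 from zetaL_getD_even v 2 h2v] at e4
        -- positions: s = 2m+1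
        have t1 := zetaL_getD_even (zetaL^[n] [0]) (m+1) (by omega)
        have t1' := zetaL_getD_odd (zetaL^[n] [0]) (m+1) (by omega)
        have t2 := zetaL_getD_even (zetaL^[n] [0]) (m+2) (by omega)
        have t2' := zetaL_getD_odd (zetaL^[n] [0]) (m+2) (by omega)
        rw [show 2*(m+1) = s + 1 by omega] at t1
        rw [show 2*(m+1)+1 = s + 2 by omega] at t1'
        rw [show 2*(m+2) = s + 3 by omega] at t2
        rw [show 2*(m+2)+1 = s + 4 by omega] at t2'
        have hv1 : v.getD 1 0 = v.getD 0 0 := by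
          rw [← e2, t1', ← t1, e1, fin2_sub_sub]
        have hv2 : v.getD 2 0 = v.getD 0 0 := by
          rw [← e4, t2', ← t2, e3, hv1, fin2_sub_sub]
        set A := v.getD 0 0 with hA
        apply no_alt5 A (n+1)
        rw [Function.iterate_succ_apply']
        apply occ_to_infix _ _ s (by simp; omega)
        intro k hk
        simp only [List.length_cons, List.length_nil] at hk
        interval_cases k
        · rw [e0]; rfl
        · rw [e1]; rfl
        · rw [e2, hv1]; rfl
        · rw [e3, hv1]; rfl
        · rw [e4, hv2]; rfl
  · intro m
    rcases Int.even_or_odd m with ⟨j, hj⟩ | ⟨j, hj⟩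
    · have hm : m = 2*j := by omega
      subst hm
      rw [zetaZ_even]
    · have hm : m = 2*j+1 := by omega
      subst hm
      rw [zetaZ_odd]
      have := fin2_eq_one_sub (hne j)
      rw [show 2*j+1+c = 2*j+c+1 by ring, this]

lemma not_both (w : ℤ → Fin 2) (hw : w ∈ Omega) (u u' : ℤ → Fin 2)
    (h1 : zetaZ u = w) (h2 : shiftZ (zetaZ u') = w) : False := by
  have hA : ∀ k : ℤ, w (2*k) ≠ w (2*k+1) := by
    intro k; rw [← h1, zetaZ_even, zetaZ_odd]; exact fin2_ne_one_sub _
  have hB : ∀ k : ℤ, w (2*k+1) ≠ w (2*k+2) := by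
    intro k
    rw [← h2]
    show zetaZ u' (2*k+1+1) ≠ zetaZ u' (2*k+2+1)
    rw [show (2*k+1+1 : ℤ) = 2*(k+1) by ring, show (2*k+2+1 : ℤ) = 2*(k+1)+1 by ring,
      zetaZ_even, zetaZ_odd]
    exact fin2_ne_one_sub _
  have halt : ∀ n : ℤ, w (n+1) = 1 - w n := by
    intro n
    rcases Int.even_or_odd n with ⟨j, hj⟩ | ⟨j, hj⟩
    · have hn : n = 2*j := by omega
      subst hn
      exact fin2_eq_one_sub (hA j)
    · have hn : n = 2*j+1 := by omega
      subst hn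
      rw [show 2*j+1+1 = 2*j+2 by ring]
      exact fin2_eq_one_sub (hB j)
  set A := w 0 with hA
  have g1 : w 1 = 1 - A := by have := halt 0; norm_num at this; exact this
  have g2 : w 2 = A := by have := halt 1; norm_num at this; rw [this, g1, fin2_sub_sub]
  have g3 : w 3 = 1 - A := by have := halt 2; norm_num at this; rw [this, g2]
  have g4 : w 4 = A := by have := halt 3; norm_num at this; rw [this, g3, fin2_sub_sub]
  have hfac : IsFactorZ [A, 1-A, A, 1-A, A] w := by
    refine ⟨0, fun k hk => ?_⟩
    simp only [List.length_cons, List.length_nil] at hk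
    interval_cases k
    · norm_num [hA]
    · norm_num [g1]
    · norm_num [g2]
    · norm_num [g3]
    · norm_num [g4]
  obtain ⟨n, hn⟩ := hw _ hfac
  exact no_alt5 A n hn

theorem omega_decomposition :
    ∀ w ∈ Omega, Xor' (w ∈ zetaZ '' Omega) (w ∈ shiftZ '' (zetaZ '' Omega)) := by
  intro w hw
  rcases good_parity w hw with h | h
  · obtain ⟨hu, he⟩ := deparse w hw 0 (by intro k; simpa using h k)
    have hzw : zetaZ (fun n => w (2*n + 0)) = w := funext fun m => by rw [he m, add_zero]
    left
    refine ⟨⟨_, hu, hzw⟩, ?_⟩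
    rintro ⟨x, ⟨u', hu', rfl⟩, hx⟩
    exact not_both w hw _ u' hzw hx
  · obtain ⟨hu, he⟩ := deparse w hw (-1) (by
      intro k
      have := h (k - 1)
      rw [show 2*(k-1)+1 = 2*k + -1 by ring, show 2*(k-1)+2 = 2*k + -1 + 1 by ring] at this
      exact this)
    have hzw : shiftZ (zetaZ (fun n => w (2*n + -1))) = w := funext fun m => by
      show zetaZ _ (m + 1) = w m
      rw [he (m+1), show m + 1 + -1 = m by ring]
    right
    refine ⟨⟨zetaZ (fun n => w (2*n + -1)), ⟨_, hu, rfl⟩, hzw⟩, ?_⟩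
    rintro ⟨u', hu', hzu⟩
    exact not_both w hw u' _ hzu hzw
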